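/- Let i : A → B be an induced subgraph inclusion that is a ×-homotopy equivalence, let v ∈ V(B) ∖ V(A) be a vertex of B admitting a fold map f : B → B − v (so that this fold is a relative fold in B with respect to A), and let j : A → B − v be the induced subgraph inclusion. Then for every graph map α : A → X, the cobase change of j along α is a ×-homotopy equivalence if and only if the cobase change of i along α is a ×-homotopy equivalence. -/

import Mathlib

/-- A graph: vertex type `V` with a symmetric adjacency relation; loops are allowed. -/
structure LGraph (V : Type) : Type where
  adj : V → V → Prop
  symm : ∀ {x y : V}, adj x y → adj y x

/-- A graph map: a vertex function preserving edges. -/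
def IsGraphHom {V W : Type} (G : LGraph V) (H : LGraph W) (f : V → W) : Prop :=
  ∀ ⦃x y : V⦄, G.adj x y → H.adj (f x) (f y)

/-- The categorical product of graphs. -/
def LGraph.prod {V W : Type} (G : LGraph V) (H : LGraph W) : LGraph (V × W) where
  adj p q := G.adj p.1 q.1 ∧ H.adj p.2 q.2
  symm h := ⟨G.symm h.1, H.symm h.2⟩

/-- The graph `I_n` on vertices `{0,…,n}` with `i ~ j` iff `|i-j| ≤ 1` (all vertices looped). -/
def pathI (n : ℕ) : LGraph (Fin (n + 1)) where
  adj i j := (i : ℕ) ≤ (j : ℕ) + 1 ∧ (j : ℕ) ≤ (i : ℕ) + 1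
  symm h := ⟨h.2, h.1⟩

/-- `f` and `g` are ×-homotopic. -/
def Homotopic {V W : Type} (G : LGraph V) (H : LGraph W) (f g : V → W) : Prop :=
  ∃ (n : ℕ) (F : V × Fin (n + 1) → W),
    IsGraphHom (G.prod (pathI n)) H F ∧ (∀ a, F (a, 0) = f a) ∧ (∀ a, F (a, Fin.last n) = g a)

/-- `f` is a ×-homotopy equivalence. -/
def IsHtpyEquiv {V W : Type} (G : LGraph V) (H : LGraph W) (f : V → W) : Prop :=
  IsGraphHom G H f ∧ ∃ g : W → V, IsGraphHom H G g ∧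
    Homotopic G G (g ∘ f) id ∧ Homotopic H H (f ∘ g) id

/-- A graph is connected if any two vertices are joined by a path of edges. -/
def LGraph.Connected {V : Type} (G : LGraph V) : Prop :=
  ∀ x y : V, Relation.ReflTransGen G.adj x y

/-- `i : A → B` is an unfold: an induced-subgraph inclusion adding exactly one new vertex `v`
with `N(v) ⊆ N(i v')` for some vertex `v'` of `A`. -/
def IsUnfold {A B : Type} (GA : LGraph A) (GB : LGraph B) (i : A → B) : Prop :=
  Function.Injective i ∧ (∀ x y : A, GA.adj x y ↔ GB.adj (i x) (i y)) ∧
  ∃ v : B, v ∉ Set.range i ∧ (∀ b : B, b ∉ Set.range i → b = v) ∧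
    ∃ v' : A, ∀ b : B, GB.adj v b → GB.adj (i v') b

/-- Relation generating the pushout of `i : A → B` along `f : A → C`. -/
def pushoutRel {A B C : Type} (i : A → B) (f : A → C) : B ⊕ C → B ⊕ C → Prop :=
  fun x y => ∃ a : A, x = Sum.inl (i a) ∧ y = Sum.inr (f a)

/-- Vertex set of the pushout. -/
def Pushout {A B C : Type} (i : A → B) (f : A → C) : Type :=
  Quot (pushoutRel i f)

/-- Adjacency on a disjoint union. -/
def sumAdj {B C : Type} (GB : LGraph B) (GC : LGraph C) (x y : B ⊕ C) : Prop :=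
  (∃ b b', x = Sum.inl b ∧ y = Sum.inl b' ∧ GB.adj b b') ∨
  (∃ c c', x = Sum.inr c ∧ y = Sum.inr c' ∧ GC.adj c c')

/-- The pushout graph of `i : A → B` along `f : A → C`: classes are adjacent iff some
representatives are adjacent in `B` or in `C`. -/
def pushoutGraph {A B C : Type} (GB : LGraph B) (GC : LGraph C) (i : A → B) (f : A → C) :
    LGraph (Pushout i f) where
  adj x y := ∃ u v : B ⊕ C,
    Quot.mk (pushoutRel i f) u = x ∧ Quot.mk (pushoutRel i f) v = y ∧ sumAdj GB GC u v
  symm := by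
    rintro x y ⟨u, v, hu, hv, h⟩
    refine ⟨v, u, hv, hu, ?_⟩
    rcases h with ⟨b, b', rfl, rfl, hbb⟩ | ⟨c, c', rfl, rfl, hcc⟩
    · exact Or.inl ⟨b', b, rfl, rfl, GB.symm hbb⟩
    · exact Or.inr ⟨c', c, rfl, rfl, GC.symm hcc⟩

/-- The cobase change `C → B ⊔_A C` of `i` along `f`. -/
def cobase {A B C : Type} (i : A → B) (f : A → C) : C → Pushout i f :=
  fun c => Quot.mk (pushoutRel i f) (Sum.inr c)

/-- The map `a ↦ (a,0)` into the cylinder `A × I_n`. -/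
def cyl0 {A : Type} (n : ℕ) : A → A × Fin (n + 1) := fun a => (a, 0)

/-- The canonical map `(A × I_n) ⊔_i B → B × I_n`, induced by `(a,t) ↦ (i a, t)`, `b ↦ (b,0)`. -/
def cylJ {A B : Type} (i : A → B) (n : ℕ) : Pushout (cyl0 (A := A) n) i → B × Fin (n + 1) :=
  Quot.lift (Sum.elim (fun p => (i p.1, p.2)) (fun b => (b, (0 : Fin (n + 1)))))
    (by rintro x y ⟨a, rfl, rfl⟩; rfl)

/-- `i : A → B` has the homotopy extension property for homotopies of length `n`. -/
def HEP {A B : Type} (GA : LGraph A) (GB : LGraph B) (i : A → B) (n : ℕ) : Prop :=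
  ∀ (Z : Type) (GZ : LGraph Z) (f : A → Z) (g : B → Z),
    IsGraphHom GA GZ f → IsGraphHom GB GZ g → (∀ a, g (i a) = f a) →
    ∀ F : A × Fin (n + 1) → Z, IsGraphHom (GA.prod (pathI n)) GZ F → (∀ a, F (a, 0) = f a) →
    ∃ G : B × Fin (n + 1) → Z, IsGraphHom (GB.prod (pathI n)) GZ G ∧
      (∀ b, G (b, 0) = g b) ∧ (∀ a t, G (i a, t) = F (a, t))

/-- `FoldsTo G S`: the graph `G` can be reduced by a finite sequence of folds to the
induced subgraph on the vertex set `S`. -/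
inductive FoldsTo {V : Type} (G : LGraph V) : Set V → Prop
  | univ : FoldsTo G Set.univ
  | step {S : Set V} {v v' : V} : FoldsTo G S → v ∈ S → v' ∈ S → v ≠ v' →
      (∀ x ∈ S, G.adj v x → G.adj v' x) → FoldsTo G (S \ {v})

/-- `RelFoldsTo G A S`: `G` can be reduced to the induced subgraph on `S` by a finite
sequence of folds relative to `A` (never removing a vertex of `A`). -/
inductive RelFoldsTo {V : Type} (G : LGraph V) (A : Set V) : Set V → Prop
  | univ : RelFoldsTo G A Set.univ
  | step {S : Set V} {v v' : V} : RelFoldsTo G A S → v ∈ S → v ∉ A → v' ∈ S → v ≠ v' →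
      (∀ x ∈ S, G.adj v x → G.adj v' x) → RelFoldsTo G A (S \ {v})

/-- `p : X → Y` has the right lifting property with respect to every unfold. -/
def RLPunfolds {X Y : Type} (GX : LGraph X) (GY : LGraph Y) (p : X → Y) : Prop :=
  ∀ (A B : Type) (GA : LGraph A) (GB : LGraph B) (i : A → B), IsUnfold GA GB i →
    ∀ (f : A → X) (g : B → Y), IsGraphHom GA GX f → IsGraphHom GB GY g →
      (∀ a, p (f a) = g (i a)) →
      ∃ h : B → X, IsGraphHom GB GX h ∧ (∀ a, h (i a) = f a) ∧ ∀ b, p (h b) = g b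

/-- The graph `L_n`: the path `0 - 1 - ⋯ - n` with a loop at `0`. -/
def Lgraph (t : ℕ) : LGraph (Fin (t + 1)) where
  adj x y := ((x : ℕ) + 1 = (y : ℕ) ∨ (y : ℕ) + 1 = (x : ℕ)) ∨ ((x : ℕ) = 0 ∧ (y : ℕ) = 0)
  symm := by tauto

/-- The graph `I_0`: a single looped vertex. -/
def I0 : LGraph Unit where
  adj _ _ := True
  symm h := h

/-- The constant graph map `p_n : L_n → I_0`. -/
def pL (n : ℕ) : Fin (n + 1) → Unit := fun _ => ()

/-- An object of the category of finite graphs. -/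
structure FinGraph : Type where
  n : ℕ
  G : LGraph (Fin n)

/-- A class of morphisms in the category of finite graphs. -/
def MorClass : Type :=
  ∀ (A B : FinGraph), (Fin A.n → Fin B.n) → Prop

/-- `f : A → B` is a retract of `g : X → Y` in the arrow category. -/
def IsRetractOf (A B X Y : FinGraph) (f : Fin A.n → Fin B.n) (g : Fin X.n → Fin Y.n) : Prop :=
  ∃ (iA : Fin A.n → Fin X.n) (rA : Fin X.n → Fin A.n)
    (iB : Fin B.n → Fin Y.n) (rB : Fin Y.n → Fin B.n),
    IsGraphHom A.G X.G iA ∧ IsGraphHom X.G A.G rA ∧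
    IsGraphHom B.G Y.G iB ∧ IsGraphHom Y.G B.G rB ∧
    (∀ a, rA (iA a) = a) ∧ (∀ b, rB (iB b) = b) ∧
    (∀ a, g (iA a) = iB (f a)) ∧ (∀ x, f (rA x) = rB (g x))

/-- A class of morphisms is closed under retracts. -/
def RetractClosed (S : MorClass) : Prop :=
  ∀ (A B X Y : FinGraph) (f : Fin A.n → Fin B.n) (g : Fin X.n → Fin Y.n),
    IsGraphHom A.G B.G f → IsGraphHom X.G Y.G g →
    IsRetractOf A B X Y f g → S X Y g → S A B f

/-- `i` has the left lifting property with respect to `p` (in the category of finite graphs). -/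
def HasLift (A B X Y : FinGraph) (i : Fin A.n → Fin B.n) (p : Fin X.n → Fin Y.n) : Prop :=
  ∀ (f : Fin A.n → Fin X.n) (g : Fin B.n → Fin Y.n),
    IsGraphHom A.G X.G f → IsGraphHom B.G Y.G g → (∀ a, p (f a) = g (i a)) →
    ∃ h : Fin B.n → Fin X.n, IsGraphHom B.G X.G h ∧ (∀ a, h (i a) = f a) ∧ ∀ b, p (h b) = g b

/-- A model structure on the category of finite graphs: classes `W`, `Cof`, `Fib` of graph maps,
each closed under retracts, with two-out-of-three for `W`, the lifting axioms, and the two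
factorization axioms. -/
structure ModelStructure (W Cof Fib : MorClass) : Prop where
  w_hom : ∀ A B f, W A B f → IsGraphHom A.G B.G f
  c_hom : ∀ A B f, Cof A B f → IsGraphHom A.G B.G f
  f_hom : ∀ A B f, Fib A B f → IsGraphHom A.G B.G f
  w_retract : RetractClosed W
  c_retract : RetractClosed Cof
  f_retract : RetractClosed Fib
  two_of_three_comp : ∀ (A B D : FinGraph) (f : Fin A.n → Fin B.n) (g : Fin B.n → Fin D.n),
    IsGraphHom A.G B.G f → IsGraphHom B.G D.G g → W A B f → W B D g → W A D (g ∘ f)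
  two_of_three_right : ∀ (A B D : FinGraph) (f : Fin A.n → Fin B.n) (g : Fin B.n → Fin D.n),
    IsGraphHom A.G B.G f → IsGraphHom B.G D.G g → W A B f → W A D (g ∘ f) → W B D g
  two_of_three_left : ∀ (A B D : FinGraph) (f : Fin A.n → Fin B.n) (g : Fin B.n → Fin D.n),
    IsGraphHom A.G B.G f → IsGraphHom B.G D.G g → W B D g → W A D (g ∘ f) → W A B f
  lift_cw_f : ∀ (A B X Y : FinGraph) (i : Fin A.n → Fin B.n) (p : Fin X.n → Fin Y.n),
    Cof A B i → W A B i → Fib X Y p → HasLift A B X Y i p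
  lift_c_fw : ∀ (A B X Y : FinGraph) (i : Fin A.n → Fin B.n) (p : Fin X.n → Fin Y.n),
    Cof A B i → Fib X Y p → W X Y p → HasLift A B X Y i p
  fact_c_fw : ∀ (A B : FinGraph) (f : Fin A.n → Fin B.n), IsGraphHom A.G B.G f →
    ∃ (Z : FinGraph) (c : Fin A.n → Fin Z.n) (p : Fin Z.n → Fin B.n),
      Cof A Z c ∧ Fib Z B p ∧ W Z B p ∧ ∀ a, p (c a) = f a
  fact_cw_f : ∀ (A B : FinGraph) (f : Fin A.n → Fin B.n), IsGraphHom A.G B.G f →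
    ∃ (Z : FinGraph) (c : Fin A.n → Fin Z.n) (p : Fin Z.n → Fin B.n),
      Cof A Z c ∧ W A Z c ∧ Fib Z B p ∧ ∀ a, p (c a) = f a

/-- The class of ×-homotopy equivalences of finite graphs. -/
def Whe : MorClass := fun A B f => IsHtpyEquiv A.G B.G f

/-- The induced subgraph of `G` on the complement of the vertex `v`. -/
def LGraph.delete {V : Type} (G : LGraph V) (v : V) : LGraph {b : V // b ≠ v} where
  adj x y := G.adj x.1 y.1
  symm h := G.symm h

section HtpyLemmas
variable {V W U : Type} {G : LGraph V} {H : LGraph W} {K : LGraph U}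

lemma homotopic_refl (f : V → W) (hf : IsGraphHom G H f) : Homotopic G H f f :=
  ⟨0, fun p => f p.1, fun _ _ h => hf h.1, fun _ => rfl, fun _ => rfl⟩

lemma homotopic_symm {f g : V → W} (h : Homotopic G H f g) : Homotopic G H g f := by
  obtain ⟨n, F, hF, h0, h1⟩ := h
  refine ⟨n, fun p => F (p.1, ⟨n - p.2.val, by omega⟩), ?_, ?_, ?_⟩
  · rintro ⟨a, t⟩ ⟨a', t'⟩ ⟨ha, ht⟩
    refine hF ⟨ha, ?_⟩
    obtain ⟨ht1, ht2⟩ := ht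
    have := t.isLt; have := t'.isLt
    simp only [pathI] at *
    omega
  · intro a; simp only [Fin.val_zero, Nat.sub_zero]
    rw [show (⟨n, by omega⟩ : Fin (n+1)) = Fin.last n from rfl]
    exact h1 a
  · intro a; simp only [Fin.val_last, Nat.sub_self]
    rw [show (⟨0, by omega⟩ : Fin (n+1)) = 0 from rfl]
    exact h0 a

lemma homotopic_trans {f g h : V → W} (h1 : Homotopic G H f g) (h2 : Homotopic G H g h) :
    Homotopic G H f h := by
  obtain ⟨n, F, hF, hF0, hF1⟩ := h1
  obtain ⟨m, F2, hG, hG0, hG1⟩ := h2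
  have key : ∀ (a : V) (t : Fin (n + m + 1)) (h1 : t.val ≤ n) (h2 : ¬ (t.val ≤ n)), False :=
    fun _ _ h1 h2 => h2 h1
  refine ⟨n + m, fun p => if hc : p.2.val ≤ n then F (p.1, ⟨p.2.val, by omega⟩)
      else F2 (p.1, ⟨p.2.val - n, by omega⟩), ?_, ?_, ?_⟩
  · rintro ⟨a, t⟩ ⟨a', t'⟩ ⟨ha, ht⟩
    obtain ⟨ht1, ht2⟩ := ht
    simp only [pathI] at ht1 ht2
    dsimp only
    split_ifs with hc1 hc2 hc2
    · exact hF ⟨ha, by simp only [pathI]; constructor <;> omega⟩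
    · -- t ≤ n < t' : t = n, t' = n+1
      have htn : t.val = n := by omega
      have ht'n : t'.val - n = 1 := by omega
      have e1 : F (a, ⟨t.val, by omega⟩) = F2 (a, ⟨0, by omega⟩) := by
        have : (⟨t.val, by omega⟩ : Fin (n+1)) = Fin.last n := by
          apply Fin.ext; simp [htn]
        rw [this, hF1]
        have : (⟨0, by omega⟩ : Fin (m+1)) = 0 := rfl
        rw [this, hG0]
      rw [e1]
      refine hG ⟨ha, ?_⟩
      simp only [pathI]; constructor <;> omega
    · have ht'n : t'.val = n := by omega
      have htn : t.val - n = 1 := by omega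
      have e1 : F (a', ⟨t'.val, by omega⟩) = F2 (a', ⟨0, by omega⟩) := by
        have : (⟨t'.val, by omega⟩ : Fin (n+1)) = Fin.last n := by
          apply Fin.ext; simp [ht'n]
        rw [this, hF1]
        have : (⟨0, by omega⟩ : Fin (m+1)) = 0 := rfl
        rw [this, hG0]
      rw [e1]
      refine hG ⟨ha, ?_⟩
      simp only [pathI]; constructor <;> omega
    · refine hG ⟨ha, ?_⟩
      have := t.isLt; have := t'.isLt
      simp only [pathI]; constructor <;> omega
  · intro a
    have : ((0 : Fin (n + m + 1)) : ℕ) = 0 := rfl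
    simp only [this]
    rw [dif_pos (by omega)]
    have : (⟨(0:ℕ), by omega⟩ : Fin (n+1)) = 0 := rfl
    rw [this, hF0]
  · intro a
    have hl : ((Fin.last (n + m)) : ℕ) = n + m := rfl
    simp only [hl]
    by_cases hm : n + m ≤ n
    · rw [dif_pos hm]
      have hm0 : m = 0 := by omega
      have e1 : (⟨n + m, by omega⟩ : Fin (n+1)) = Fin.last n := by
        apply Fin.ext; simp [hm0]
      rw [e1, hF1]
      have e2 : h a = F2 (a, Fin.last m) := (hG1 a).symm
      rw [e2]
      have e3 : (Fin.last m) = (0 : Fin (m+1)) := by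
        apply Fin.ext; simp [hm0]
      rw [e3, hG0]
    · rw [dif_neg hm]
      have e1 : (⟨n + m - n, by omega⟩ : Fin (m+1)) = Fin.last m := by
        apply Fin.ext; simp
      rw [e1, hG1]

lemma homotopic_post {f g : V → W} (h : Homotopic G H f g) {p : W → U}
    (hp : IsGraphHom H K p) : Homotopic G K (p ∘ f) (p ∘ g) := by
  obtain ⟨n, F, hF, h0, h1⟩ := h
  exact ⟨n, p ∘ F, fun _ _ hxy => hp (hF hxy),
    fun a => by simp [Function.comp, h0 a], fun a => by simp [Function.comp, h1 a]⟩

lemma homotopic_pre {f g : W → U} (h : Homotopic H K f g) {p : V → W}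
    (hp : IsGraphHom G H p) : Homotopic G K (f ∘ p) (g ∘ p) := by
  obtain ⟨n, F, hF, h0, h1⟩ := h
  exact ⟨n, fun q => F (p q.1, q.2), fun _ _ hxy => hF ⟨hp hxy.1, hxy.2⟩,
    fun a => h0 _, fun a => h1 _⟩

lemma htpyEquiv_comp {f : V → W} {g : W → U} (hf : IsHtpyEquiv G H f)
    (hg : IsHtpyEquiv H K g) : IsHtpyEquiv G K (g ∘ f) := by
  obtain ⟨hfh, f', hf'h, hff'1, hff'2⟩ := hf
  obtain ⟨hgh, g', hg'h, hgg'1, hgg'2⟩ := hg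
  refine ⟨fun _ _ h => hgh (hfh h), f' ∘ g', fun _ _ h => hf'h (hg'h h), ?_, ?_⟩
  · have s1 : Homotopic G G (f' ∘ ((g' ∘ g) ∘ f)) (f' ∘ (id ∘ f)) :=
      homotopic_post (homotopic_pre hgg'1 hfh) hf'h
    exact homotopic_trans s1 hff'1
  · have s1 : Homotopic K K (g ∘ ((f ∘ f') ∘ g')) (g ∘ (id ∘ g')) :=
      homotopic_post (homotopic_pre hff'2 hg'h) hgh
    exact homotopic_trans s1 hgg'2

lemma htpyEquiv_cancel_left {φ : W → U} {g : V → W} (hφ : IsHtpyEquiv H K φ)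
    (hg : IsGraphHom G H g) (h : IsHtpyEquiv G K (φ ∘ g)) : IsHtpyEquiv G H g := by
  obtain ⟨hφh, ψ, hψh, hψφ, hφψ⟩ := hφ
  obtain ⟨hgh, k, hkh, hk1, hk2⟩ := h
  refine ⟨hg, k ∘ φ, fun _ _ hxy => hkh (hφh hxy), hk1, ?_⟩
  -- goal : Homotopic H H (g ∘ (k ∘ φ)) id
  have hcomp : IsGraphHom H H (g ∘ (k ∘ φ)) := fun _ _ hxy => hg (hkh (hφh hxy))
  have s1 : Homotopic H H (id ∘ (g ∘ (k ∘ φ))) ((ψ ∘ φ) ∘ (g ∘ (k ∘ φ))) :=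
    homotopic_pre (homotopic_symm hψφ) hcomp
  have s2 : Homotopic H H (ψ ∘ (((φ ∘ g) ∘ k) ∘ φ)) (ψ ∘ (id ∘ φ)) :=
    homotopic_post (homotopic_pre hk2 hφh) hψh
  exact homotopic_trans s1 (homotopic_trans s2 hψφ)

end HtpyLemmas

section PushoutFold

variable {A B X : Type} (i : A → B) (α : A → X) (v : B) (hv : v ∉ Set.range i)
  (v'' : B)

open Classical in
noncomputable def s13f (hne : v'' ≠ v) : B → {b : B // b ≠ v} :=
  fun b => if h : b = v then ⟨v'', hne⟩ else ⟨b, h⟩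

noncomputable def s13phi (hne : v'' ≠ v) :
    Pushout i α → Pushout (fun a => (⟨i a, fun h => hv ⟨a, h⟩⟩ : {b : B // b ≠ v})) α :=
  Quot.lift
    (Sum.elim (fun b => Quot.mk _ (Sum.inl (s13f v v'' hne b)))
      (fun x => Quot.mk _ (Sum.inr x)))
    (by rintro _ _ ⟨a, rfl, rfl⟩
        show Quot.mk _ (Sum.inl (s13f v v'' hne (i a))) = Quot.mk _ (Sum.inr (α a))
        have : s13f v v'' hne (i a) = ⟨i a, fun h => hv ⟨a, h⟩⟩ :=
          dif_neg (fun h => hv ⟨a, h⟩)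
        rw [this]
        exact Quot.sound ⟨a, rfl, rfl⟩)

noncomputable def s13psi :
    Pushout (fun a => (⟨i a, fun h => hv ⟨a, h⟩⟩ : {b : B // b ≠ v})) α → Pushout i α :=
  Quot.lift
    (Sum.elim (fun b => Quot.mk _ (Sum.inl b.1)) (fun x => Quot.mk _ (Sum.inr x)))
    (by rintro _ _ ⟨a, rfl, rfl⟩
        exact Quot.sound ⟨a, rfl, rfl⟩)

theorem s13main (hne : v'' ≠ v) (GB : LGraph B) (hfold : ∀ b : B, GB.adj v b → GB.adj v'' b) (GX : LGraph X) :
    (IsHtpyEquiv GX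
        (pushoutGraph (GB.delete v) GX (fun a => ⟨i a, fun h => hv ⟨a, h⟩⟩) α)
        (cobase (fun a => (⟨i a, fun h => hv ⟨a, h⟩⟩ : {b : B // b ≠ v})) α) ↔
      IsHtpyEquiv GX (pushoutGraph GB GX i α) (cobase i α)) := by
  classical
  set j : A → {b : B // b ≠ v} := fun a => ⟨i a, fun h => hv ⟨a, h⟩⟩ with hj
  set GP := pushoutGraph GB GX i α with hGP
  set GP' := pushoutGraph (GB.delete v) GX j α with hGP'
  set f := s13f v v'' hne with hf
  set φ := s13phi i α v hv v'' hne with hφ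
  set ψ := s13psi i α v hv with hψ
  have hfhom : ∀ b b', GB.adj b b' → GB.adj (f b).1 (f b').1 := by
    intro b b' h
    rw [hf]
    unfold s13f
    split_ifs with h1 h2 h2
    · rw [h1, h2] at h
      exact hfold v'' (GB.symm (hfold v h))
    · rw [h1] at h; exact hfold b' h
    · rw [h2] at h; exact GB.symm (hfold b (GB.symm h))
    · exact h
  have hφhom : IsGraphHom GP GP' φ := by
    rintro x y ⟨u, w, rfl, rfl, h⟩
    rcases h with ⟨b, b', rfl, rfl, hbb⟩ | ⟨c, c', rfl, rfl, hcc⟩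
    · exact ⟨Sum.inl (f b), Sum.inl (f b'), rfl, rfl,
        Or.inl ⟨_, _, rfl, rfl, hfhom b b' hbb⟩⟩
    · exact ⟨Sum.inr c, Sum.inr c', rfl, rfl, Or.inr ⟨_, _, rfl, rfl, hcc⟩⟩
  have hψhom : IsGraphHom GP' GP ψ := by
    rintro x y ⟨u, w, rfl, rfl, h⟩
    rcases h with ⟨b, b', rfl, rfl, hbb⟩ | ⟨c, c', rfl, rfl, hcc⟩
    · exact ⟨Sum.inl b.1, Sum.inl b'.1, rfl, rfl, Or.inl ⟨_, _, rfl, rfl, hbb⟩⟩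
    · exact ⟨Sum.inr c, Sum.inr c', rfl, rfl, Or.inr ⟨_, _, rfl, rfl, hcc⟩⟩
  have hφψ : ∀ p, φ (ψ p) = p := by
    intro p
    induction p using Quot.ind with
    | _ u =>
      cases u with
      | inl b =>
        show Quot.mk _ (Sum.inl (f b.1)) = Quot.mk _ (Sum.inl b)
        have : f b.1 = b := dif_neg b.2
        rw [this]
      | inr x => rfl
  have hkey : ∀ p q, GP.adj p q → GP.adj (ψ (φ p)) q := by
    rintro _ q ⟨u, w, rfl, rfl, h⟩
    by_cases huv : u = Sum.inl v
    · subst huv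
      have hfv : f v = ⟨v'', hne⟩ := dif_pos rfl
      rcases h with ⟨b, b', hb, rfl, hbb⟩ | ⟨c, c', hc, _, _⟩
      · have hbv : b = v := by injection hb.symm
        subst hbv
        refine ⟨Sum.inl v'', Sum.inl b', ?_, rfl, Or.inl ⟨_, _, rfl, rfl, hfold b' hbb⟩⟩
        show Quot.mk _ (Sum.inl v'') = Quot.mk _ (Sum.inl (f b).1)
        rw [hfv]
      · exact absurd hc (by simp)
    · have heq : ψ (φ (Quot.mk (pushoutRel i α) u)) = Quot.mk (pushoutRel i α) u := by
        cases u with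
        | inl b =>
          have hbv : b ≠ v := fun hh => huv (by rw [hh])
          show Quot.mk _ (Sum.inl (f b).1) = Quot.mk _ (Sum.inl b)
          have : f b = ⟨b, hbv⟩ := dif_neg hbv
          rw [this]
        | inr x => rfl
      rw [heq]
      exact ⟨u, w, rfl, rfl, h⟩
  have hψφ : Homotopic GP GP (ψ ∘ φ) id := by
    refine ⟨1, fun q => if q.2 = 0 then ψ (φ q.1) else q.1, ?_, ?_, ?_⟩
    · rintro ⟨p, t⟩ ⟨p', t'⟩ ⟨hp, ht⟩
      dsimp only
      split_ifs with h1 h2 h2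
      · exact hψhom (hφhom hp)
      · exact hkey p p' hp
      · exact GP.symm (hkey p' p (GP.symm hp))
      · exact hp
    · intro a; simp
    · intro a; simp [Fin.last]
  have hcb : IsGraphHom GX GP (cobase i α) := fun x y h =>
    ⟨Sum.inr x, Sum.inr y, rfl, rfl, Or.inr ⟨x, y, rfl, rfl, h⟩⟩
  have hφeq : IsHtpyEquiv GP GP' φ := by
    refine ⟨hφhom, ψ, hψhom, hψφ, ?_⟩
    have : φ ∘ ψ = id := funext hφψ
    rw [this]
    exact homotopic_refl id (fun _ _ h => h)
  have hcbeq : cobase j α = φ ∘ cobase i α := rfl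
  constructor
  · intro h
    refine htpyEquiv_cancel_left hφeq hcb ?_
    rw [← hcbeq]
    exact h
  · intro h
    rw [hcbeq]
    exact htpyEquiv_comp h hφeq

end PushoutFold

/-- let `i : A → B` be an induced subgraph inclusion and a ×-homotopy
equivalence, `v ∉ A` a vertex of `B` admitting a (relative) fold `B → B - v` (folding `v` to
`v'' ≠ v`), and `j : A → B - v` the induced inclusion.  For every graph map `α : A → X`,
the cobase change of `j` along `α` is a ×-homotopy equivalence iff the cobase change
of `i` along `α` is. -/
theorem stmt13 {A B X : Type} (GA : LGraph A) (GB : LGraph B) (i : A → B)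
    (hind : Function.Injective i ∧ ∀ a a' : A, GA.adj a a' ↔ GB.adj (i a) (i a'))
    (hhe : IsHtpyEquiv GA GB i)
    (v : B) (hv : v ∉ Set.range i)
    (v'' : B) (hne : v'' ≠ v) (hfold : ∀ b : B, GB.adj v b → GB.adj v'' b)
    (GX : LGraph X) (α : A → X) (hα : IsGraphHom GA GX α) :
    (IsHtpyEquiv GX
        (pushoutGraph (GB.delete v) GX (fun a => ⟨i a, fun h => hv ⟨a, h⟩⟩) α)
        (cobase (fun a => (⟨i a, fun h => hv ⟨a, h⟩⟩ : {b : B // b ≠ v})) α) ↔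
      IsHtpyEquiv GX (pushoutGraph GB GX i α) (cobase i α)) :=
  s13main i α v hv v'' hne GB hfold GX
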